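/- arXiv:1110.5200 — 3 statements merged into one kernel-verified Lean document; each statement's English description precedes it below -/
import Mathlib

section
/- Let n ≥ 1 and let (a_0, ..., a_n) be complex numbers, not all zero, with Σ_k |a_k|^2 = 1. Then the maximum over (θ,φ) ∈ [0,π] × [0,2π) of |Σ_{k=0}^n a_k e^{i k φ} √(binom(n,k)) cos(θ/2)^{n−k} sin(θ/2)^k|^2 is at least 1/(n+1). -/
open intervalIntegral

lemma integ_bern (k m : ℕ) :
    ∫ x in (0:ℝ)..1, x ^ k * (1 - x) ^ m
      = (k.factorial * m.factorial : ℝ) / (k + m + 1).factorial := by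
  induction m generalizing k with
  | zero =>
    rw [show (fun x:ℝ => x ^ k * (1-x)^0) = fun x:ℝ => x ^ k by funext x; simp]
    rw [integral_pow]
    rw [Nat.factorial_succ]
    have h3 : ((k).factorial : ℝ) ≠ 0 := by positivity
    push_cast
    field_simp
    simp
  | succ m ih =>
    have h1 : ∀ x : ℝ, x ^ k * (1 - x) ^ (m + 1)
        = x ^ k * (1 - x) ^ m - x ^ (k+1) * (1 - x) ^ m := by
      intro x; ring
    have hi : ∀ j : ℕ, IntervalIntegrable (fun x : ℝ => x ^ j * (1 - x) ^ m)
        MeasureTheory.volume 0 1 := by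
      intro j
      exact (Continuous.mul (continuous_pow j)
        (((continuous_const.sub continuous_id).pow m))).intervalIntegrable 0 1
    rw [intervalIntegral.integral_congr (fun x _ => h1 x),
      intervalIntegral.integral_sub (hi k) (hi (k+1)), ih k, ih (k+1)]
    have h2 : ((k + (m+1) + 1).factorial : ℝ) ≠ 0 := by positivity
    have h3 : ((k + m + 1).factorial : ℝ) ≠ 0 := by positivity
    have h4 : ((k + 1 + m + 1).factorial : ℝ) ≠ 0 := by positivity
    have e1 : k + (m+1) + 1 = (k + m + 1) + 1 := by ring
    have e2 : k + 1 + m + 1 = (k + m + 1) + 1 := by ring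
    rw [e1, e2] at *
    rw [Nat.factorial_succ]
    push_cast [Nat.factorial_succ]
    field_simp
    ring

lemma exists_good_x (n : ℕ) (p : Fin (n+1) → ℝ) (hp : ∀ k, 0 ≤ p k) (hs : ∑ k, p k = 1) :
    ∃ x ∈ Set.Icc (0:ℝ) 1, (1:ℝ)/(n+1) ≤
      ∑ k : Fin (n+1), p k * (n.choose (k:ℕ)) * x^(k:ℕ) * (1-x)^(n-(k:ℕ)) := by
  set g : ℝ → ℝ := fun x => ∑ k : Fin (n+1), p k * (n.choose (k:ℕ)) * x^(k:ℕ) * (1-x)^(n-(k:ℕ)) with hg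
  have hcont : Continuous g := by
    apply continuous_finset_sum
    intro k _
    continuity
  obtain ⟨x₀, hx₀, hmax⟩ := isCompact_Icc.exists_isMaxOn (Set.nonempty_Icc.2 zero_le_one)
    hcont.continuousOn
  refine ⟨x₀, hx₀, ?_⟩
  have hint : ∫ x in (0:ℝ)..1, g x = 1/(n+1) := by
    rw [hg]
    rw [intervalIntegral.integral_finset_sum]
    · have : ∀ k : Fin (n+1),
          (∫ x in (0:ℝ)..1, p k * (n.choose (k:ℕ)) * x^(k:ℕ) * (1-x)^(n-(k:ℕ)))
            = p k * (1/(n+1)) := by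
        intro k
        have : (fun x : ℝ => p k * (n.choose (k:ℕ)) * x^(k:ℕ) * (1-x)^(n-(k:ℕ)))
            = fun x : ℝ => (p k * (n.choose (k:ℕ))) * (x^(k:ℕ) * (1-x)^(n-(k:ℕ))) := by
          funext x; ring
        rw [this, intervalIntegral.integral_const_mul, integ_bern]
        have hk : (k:ℕ) ≤ n := Nat.lt_succ_iff.mp k.isLt
        have he : (k:ℕ) + (n - (k:ℕ)) + 1 = n + 1 := by omega
        rw [he]
        have hcf : ((n.choose (k:ℕ)) : ℝ) * ((k:ℕ).factorial * (n - (k:ℕ)).factorial) = n.factorial := by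
          rw_mod_cast [← Nat.choose_mul_factorial_mul_factorial hk]; push_cast; ring
        have h1 : ((n+1).factorial : ℝ) ≠ 0 := by positivity
        rw [Nat.factorial_succ]
        push_cast
        field_simp
        linear_combination (p k) * hcf
      rw [Finset.sum_congr rfl (fun k _ => this k), ← Finset.sum_mul, hs, one_mul]
    · intro k _
      exact (by continuity : Continuous fun x : ℝ => p k * (n.choose (k:ℕ)) * x^(k:ℕ) * (1-x)^(n-(k:ℕ))).intervalIntegrable 0 1
  have hle : ∫ x in (0:ℝ)..1, g x ≤ ∫ x in (0:ℝ)..1, g x₀ := by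
    apply intervalIntegral.integral_mono_on zero_le_one
      (hcont.intervalIntegrable 0 1) (intervalIntegrable_const)
    intro x hx
    exact hmax hx
  rw [hint] at hle
  simpa using hle

open Complex

lemma inner_dft (N : ℕ) (hN : 0 < N) (k l : Fin N) :
    ∑ j : Fin N, Complex.exp (Complex.I * (((k:ℕ):ℂ) - ((l:ℕ):ℂ)) * ((2 * Real.pi * (j:ℕ) / N : ℝ) : ℂ))
      = if k = l then (N:ℂ) else 0 := by
  rcases eq_or_ne k l with h | h
  · subst h
    simp
  · rw [if_neg h]
    set d : ℂ := ((k:ℕ):ℂ) - ((l:ℕ):ℂ) with hd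
    set z : ℂ := Complex.exp (Complex.I * d * (2 * Real.pi / N)) with hz
    have hterm : ∀ j : Fin N,
        Complex.exp (Complex.I * d * ((2 * Real.pi * (j:ℕ) / N : ℝ) : ℂ)) = z ^ (j:ℕ) := by
      intro j
      rw [hz, ← Complex.exp_nat_mul]
      congr 1
      push_cast
      ring
    rw [Finset.sum_congr rfl (fun j _ => hterm j), Fin.sum_univ_eq_sum_range (fun i => z ^ i)]
    have hNne : ((N:ℂ)) ≠ 0 := Nat.cast_ne_zero.mpr hN.ne'
    have hz1 : z ≠ 1 := by
      intro hzz
      rw [hz, Complex.exp_eq_one_iff] at hzz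
      obtain ⟨m, hm⟩ := hzz
      have hpi : ((Real.pi:ℂ)) ≠ 0 := Complex.ofReal_ne_zero.mpr Real.pi_ne_zero
      field_simp at hm
      have h2 : (2*(Real.pi:ℂ)*Complex.I) * d = (2*(Real.pi:ℂ)*Complex.I) * ((m:ℂ)*N) := by
        linear_combination (2*(Real.pi:ℂ)*Complex.I) * hm
      have h3 : d = (m:ℂ) * N :=
        mul_left_cancel₀ (mul_ne_zero (mul_ne_zero two_ne_zero hpi) Complex.I_ne_zero) h2
      have h4 : ((k:ℕ):ℤ) - ((l:ℕ):ℤ) = m * N := by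
        rw [hd] at h3
        exact_mod_cast h3
      have h5 : |((k:ℕ):ℤ) - ((l:ℕ):ℤ)| < (N:ℤ) := by
        have := k.isLt; have := l.isLt
        rw [abs_lt]; omega
      have h6 : ((k:ℕ):ℤ) - ((l:ℕ):ℤ) = 0 :=
        Int.eq_zero_of_abs_lt_dvd ⟨m, by linarith [h4]⟩ h5
      apply h
      have : (k:ℕ) = (l:ℕ) := by omega
      exact Fin.ext this
    rw [geom_sum_eq hz1]
    have hzN : z ^ N = 1 := by
      rw [hz, ← Complex.exp_nat_mul]
      have : (N:ℂ) * (Complex.I * d * (2 * Real.pi / N)) = d * (2 * Real.pi * Complex.I) := by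
        field_simp
      rw [this]
      have hdint : d = (((k:ℕ):ℤ) - ((l:ℕ):ℤ) : ℤ) := by push_cast [hd]; ring
      rw [hdint]
      exact Complex.exp_int_mul_two_pi_mul_I _
    rw [hzN]
    simp

lemma sum_overlap (N : ℕ) (hN : 0 < N) (b : Fin N → ℂ) :
    ∑ j : Fin N, Complex.normSq (∑ k : Fin N,
        b k * Complex.exp (Complex.I * ((k:ℕ):ℂ) * ((2 * Real.pi * (j:ℕ) / N : ℝ) : ℂ)))
      = N * ∑ k : Fin N, Complex.normSq (b k) := by
  set φ : Fin N → ℂ := fun j => ((2 * Real.pi * (j:ℕ) / N : ℝ) : ℂ) with hφ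
  set f : Fin N → ℂ := fun j => ∑ k : Fin N, b k * Complex.exp (Complex.I * ((k:ℕ):ℂ) * φ j)
    with hf
  have hconj : ∀ (m : ℕ) (j : Fin N),
      (starRingEnd ℂ) (Complex.exp (Complex.I * ((m:ℕ):ℂ) * φ j))
        = Complex.exp (-(Complex.I * ((m:ℕ):ℂ) * φ j)) := by
    intro m j
    rw [← Complex.exp_conj]
    congr 1
    simp only [hφ, map_mul, Complex.conj_I, Complex.conj_natCast, Complex.conj_ofReal]
    ring
  have key : ∀ j, (Complex.normSq (f j) : ℂ) = ∑ k : Fin N, ∑ l : Fin N,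
      (b k * (starRingEnd ℂ) (b l))
        * Complex.exp (Complex.I * (((k:ℕ):ℂ) - ((l:ℕ):ℂ)) * φ j) := by
    intro j
    rw [← Complex.mul_conj, hf]
    simp only [map_sum, map_mul]
    rw [Finset.sum_mul_sum]
    refine Finset.sum_congr rfl fun k _ => Finset.sum_congr rfl fun l _ => ?_
    rw [hconj l j]
    rw [show b k * Complex.exp (Complex.I * ((k:ℕ):ℂ) * φ j) *
        ((starRingEnd ℂ) (b l) * Complex.exp (-(Complex.I * ((l:ℕ):ℂ) * φ j)))
      = (b k * (starRingEnd ℂ) (b l)) *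
        (Complex.exp (Complex.I * ((k:ℕ):ℂ) * φ j) *
          Complex.exp (-(Complex.I * ((l:ℕ):ℂ) * φ j))) from by ring,
      ← Complex.exp_add]
    congr 2
    ring
  have hsum : ∑ j : Fin N, (Complex.normSq (f j) : ℂ)
      = (N:ℂ) * ∑ k : Fin N, (Complex.normSq (b k) : ℂ) := by
    rw [Finset.sum_congr rfl fun j _ => key j]
    rw [Finset.sum_comm]
    have : ∀ k : Fin N, (∑ j : Fin N, ∑ l : Fin N,
        (b k * (starRingEnd ℂ) (b l))
          * Complex.exp (Complex.I * (((k:ℕ):ℂ) - ((l:ℕ):ℂ)) * φ j))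
        = (b k * (starRingEnd ℂ) (b k)) * N := by
      intro k
      rw [Finset.sum_comm]
      have h1 : ∀ l : Fin N, (∑ j : Fin N,
          (b k * (starRingEnd ℂ) (b l))
            * Complex.exp (Complex.I * (((k:ℕ):ℂ) - ((l:ℕ):ℂ)) * φ j))
          = (b k * (starRingEnd ℂ) (b l)) * (if k = l then (N:ℂ) else 0) := by
        intro l
        rw [← Finset.mul_sum, inner_dft N hN k l]
      rw [Finset.sum_congr rfl fun l _ => h1 l]
      simp [mul_ite, Finset.sum_ite_eq, mul_zero]
    rw [Finset.sum_congr rfl fun k _ => this k]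
    simp only [Complex.mul_conj]
    rw [← Finset.sum_mul]
    ring
  exact_mod_cast hsum

theorem stmt_2 (n : ℕ) (hn : 1 ≤ n) (a : Fin (n + 1) → ℂ)
    (hne : ∃ k, a k ≠ 0)
    (ha : ∑ k, ‖a k‖ ^ 2 = 1) :
    ∃ θ ∈ Set.Icc (0:ℝ) Real.pi, ∃ φ ∈ Set.Ico (0:ℝ) (2 * Real.pi),
      (1 : ℝ) / (n + 1) ≤
        ‖∑ k : Fin (n + 1),
          a k * Complex.exp (Complex.I * ((k : ℕ) : ℂ) * (φ : ℂ)) *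
            ((Real.sqrt (n.choose (k : ℕ)) : ℝ) : ℂ) *
            ((Real.cos (θ / 2) : ℝ) : ℂ) ^ (n - (k : ℕ)) *
            ((Real.sin (θ / 2) : ℝ) : ℂ) ^ (k : ℕ)‖ ^ 2 := by
  have hp : ∀ k : Fin (n+1), 0 ≤ ‖a k‖ ^ 2 := fun k => sq_nonneg _
  obtain ⟨x, hx, hgx⟩ := exists_good_x n (fun k => ‖a k‖ ^ 2) hp ha
  set θ : ℝ := 2 * Real.arcsin (Real.sqrt x) with hθ
  have hsx0 : 0 ≤ Real.sqrt x := Real.sqrt_nonneg x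
  have hsx1 : Real.sqrt x ≤ 1 := Real.sqrt_le_one.mpr hx.2
  have hθmem : θ ∈ Set.Icc (0:ℝ) Real.pi := by
    constructor
    · have := Real.arcsin_nonneg.mpr hsx0
      rw [hθ]; linarith
    · have := Real.arcsin_le_pi_div_two (Real.sqrt x)
      rw [hθ]; linarith
  have hhalf : θ / 2 = Real.arcsin (Real.sqrt x) := by rw [hθ]; ring
  have hsin : Real.sin (θ/2) = Real.sqrt x := by
    rw [hhalf, Real.sin_arcsin (by linarith) hsx1]
  have hsin2 : Real.sin (θ/2) * Real.sin (θ/2) = x := by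
    rw [hsin]; exact Real.mul_self_sqrt hx.1
  have hcos2 : Real.cos (θ/2) * Real.cos (θ/2) = 1 - x := by
    rw [hhalf, Real.cos_arcsin]
    rw [Real.mul_self_sqrt (by nlinarith [Real.sq_sqrt hx.1])]
    rw [Real.sq_sqrt hx.1]
  set b : Fin (n+1) → ℂ := fun k =>
    a k * ((Real.sqrt (n.choose (k:ℕ)) : ℝ) : ℂ) *
      ((Real.cos (θ / 2) : ℝ) : ℂ) ^ (n - (k:ℕ)) *
      ((Real.sin (θ / 2) : ℝ) : ℂ) ^ (k:ℕ) with hb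
  have hnormb : ∀ k : Fin (n+1), Complex.normSq (b k)
      = ‖a k‖ ^ 2 * (n.choose (k:ℕ)) * x^(k:ℕ) * (1-x)^(n-(k:ℕ)) := by
    intro k
    rw [hb]
    rw [map_mul, map_mul, map_mul, map_pow, map_pow]
    rw [Complex.normSq_ofReal, Complex.normSq_ofReal, Complex.normSq_ofReal]
    rw [Real.mul_self_sqrt (Nat.cast_nonneg _), hsin2, hcos2]
    rw [Complex.normSq_eq_norm_sq]
    ring
  have hsumb : (1:ℝ)/(n+1) ≤ ∑ k : Fin (n+1), Complex.normSq (b k) := by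
    rw [Finset.sum_congr rfl fun k _ => hnormb k]
    exact hgx
  have hov := sum_overlap (n+1) (Nat.succ_pos n) b
  have hconst : ∑ _j : Fin (n+1), (1:ℝ)/(n+1) ≤ ∑ j : Fin (n+1),
      Complex.normSq (∑ k : Fin (n+1),
        b k * Complex.exp (Complex.I * ((k:ℕ):ℂ) * ((2 * Real.pi * (j:ℕ) / (n+1:ℕ) : ℝ) : ℂ))) := by
    rw [hov, Finset.sum_const, Finset.card_univ, Fintype.card_fin, nsmul_eq_mul]
    exact mul_le_mul_of_nonneg_left hsumb (by positivity)
  obtain ⟨j, _, hj⟩ := Finset.exists_le_of_sum_le Finset.univ_nonempty hconst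
  set φ : ℝ := 2 * Real.pi * (j:ℕ) / (n+1:ℕ) with hφ
  have hφmem : φ ∈ Set.Ico (0:ℝ) (2 * Real.pi) := by
    constructor
    · rw [hφ]; positivity
    · rw [hφ]
      have hjlt : ((j:ℕ):ℝ) < ((n+1:ℕ):ℝ) := by exact_mod_cast j.isLt
      have h1 : ((n+1:ℕ):ℝ) > 0 := by positivity
      rw [div_lt_iff₀ h1]
      nlinarith [Real.pi_pos]
  refine ⟨θ, hθmem, φ, hφmem, ?_⟩
  rw [Complex.sq_norm]
  have heq : (∑ k : Fin (n + 1),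
      a k * Complex.exp (Complex.I * ((k : ℕ) : ℂ) * (φ : ℂ)) *
        ((Real.sqrt (n.choose (k : ℕ)) : ℝ) : ℂ) *
        ((Real.cos (θ / 2) : ℝ) : ℂ) ^ (n - (k : ℕ)) *
        ((Real.sin (θ / 2) : ℝ) : ℂ) ^ (k : ℕ))
      = ∑ k : Fin (n+1), b k * Complex.exp (Complex.I * ((k:ℕ):ℂ) * (φ : ℂ)) := by
    refine Finset.sum_congr rfl fun k _ => ?_
    rw [hb]; ring
  rw [heq]
  exact hj
end

section
/- Let ψ : (Fin n → Fin 2) → ℂ be the coefficient function of an n-partite qubit state with nonnegative real coefficients (a positive state), and for each product state Λ = ⊗_j σ_j with σ_j = b_0^j|0⟩ + b_1^j|1⟩, define Λ⁺ = ⊗_j (|b_0^j| |0⟩ + |b_1^j| |1⟩). Then |⟨ψ|Λ⁺⟩| ≥ |⟨ψ|Λ⟩|. Consequently, if Λ maximizes |⟨ψ|·⟩| over normalized product states, then so does the positive product state Λ⁺. -/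
/-- Overlap `⟨ψ|Λ⟩` of a positive (real, nonnegative coefficient) `n`-qubit state `ψ`
with the product state `Λ = ⊗ⱼ (b j 0 |0⟩ + b j 1 |1⟩)`. -/
noncomputable def productOverlap (n : ℕ) (ψ : (Fin n → Fin 2) → ℂ)
    (b : Fin n → Fin 2 → ℂ) : ℂ :=
  ∑ i : Fin n → Fin 2, ψ i * ∏ j, b j (i j)

theorem stmt_6 (n : ℕ) (ψ : (Fin n → Fin 2) → ℂ)
    (hpos : ∀ i, 0 ≤ (ψ i).re ∧ (ψ i).im = 0)
    (b : Fin n → Fin 2 → ℂ) :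
    norm (productOverlap n ψ b) ≤
      norm (productOverlap n ψ (fun j v => ((norm (b j v) : ℝ) : ℂ))) ∧
    ((∀ j, ∑ v, norm (b j v) ^ 2 = 1) →
      (∀ b' : Fin n → Fin 2 → ℂ, (∀ j, ∑ v, norm (b' j v) ^ 2 = 1) →
        norm (productOverlap n ψ b') ≤ norm (productOverlap n ψ b)) →
      ∀ b' : Fin n → Fin 2 → ℂ, (∀ j, ∑ v, norm (b' j v) ^ 2 = 1) →
        norm (productOverlap n ψ b') ≤
          norm (productOverlap n ψ (fun j v => ((norm (b j v) : ℝ) : ℂ)))) := by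
  have hψ : ∀ i, ψ i = ((ψ i).re : ℂ) := by
    intro i
    apply Complex.ext <;> simp [(hpos i).2]
  have key : norm (productOverlap n ψ b) ≤
      norm (productOverlap n ψ (fun j v => ((norm (b j v) : ℝ) : ℂ))) := by
    have hA : productOverlap n ψ (fun j v => ((norm (b j v) : ℝ) : ℂ)) =
        ((∑ i : Fin n → Fin 2, (ψ i).re * ∏ j, norm (b j (i j)) : ℝ) : ℂ) := by
      unfold productOverlap
      push_cast
      refine Finset.sum_congr rfl fun i _ => ?_
      rw [hψ i]; simp
    rw [hA]
    have hnn : 0 ≤ ∑ i : Fin n → Fin 2, (ψ i).re * ∏ j, norm (b j (i j)) := by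
      refine Finset.sum_nonneg fun i _ => mul_nonneg (hpos i).1 ?_
      exact Finset.prod_nonneg fun j _ => norm_nonneg _
    rw [Complex.norm_real, Real.norm_of_nonneg hnn]
    calc norm (productOverlap n ψ b)
        ≤ ∑ i : Fin n → Fin 2, norm (ψ i * ∏ j, b j (i j)) := by
          exact norm_sum_le _ _
      _ = ∑ i : Fin n → Fin 2, (ψ i).re * ∏ j, norm (b j (i j)) := by
          refine Finset.sum_congr rfl fun i _ => ?_
          rw [norm_mul, norm_prod]
          rw [hψ i, Complex.norm_real, Real.norm_of_nonneg (hpos i).1]; simp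
  exact ⟨key, fun _ hmax b' hb' => (hmax b' hb').trans key⟩
end

section
/- Let ψ = a_{00}|00⟩ + a_{01}|01⟩ + a_{10}|10⟩ + a_{11}|11⟩ be a normalized two-qubit state such that |00⟩ is a global maximum of λ ↦ |⟨ψ|λ⟩| over normalized product states λ. Then a_{01} = a_{10} = 0 and |a_{00}|² ≥ |a_{11}|². -/
noncomputable def sg (z : ℂ) : ℂ := if z = 0 then 1 else (starRingEnd ℂ) z / ‖z‖

lemma abs_sg (z : ℂ) : ‖sg z‖ = 1 := by
  unfold sg
  split
  · simp
  · rename_i h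
    rw [norm_div, Complex.norm_conj, Complex.norm_real, Real.norm_eq_abs,
      abs_of_nonneg (norm_nonneg z), div_self (norm_ne_zero_iff.mpr h)]

lemma mul_sg (z : ℂ) : z * sg z = ‖z‖ := by
  unfold sg
  split
  · simp_all
  · rename_i h
    rw [mul_div_assoc', Complex.mul_conj]
    rw [← Complex.sq_norm]
    have hz : (‖z‖ : ℂ) ≠ 0 := by
      exact_mod_cast Complex.ofReal_ne_zero.mpr (norm_ne_zero_iff.mpr h)
    field_simp
    push_cast
    ring

lemma exists_d (x y : ℂ) (h : ¬(x = 0 ∧ y = 0)) :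
    ∃ d : Fin 2 → ℂ, ‖d 0‖ ^ 2 + ‖d 1‖ ^ 2 = 1 ∧
      x * d 0 + y * d 1 = (Real.sqrt (‖x‖ ^ 2 + ‖y‖ ^ 2) : ℝ) := by
  set A := ‖x‖ with hA
  set B := ‖y‖ with hB
  have hAB : 0 < A ^ 2 + B ^ 2 := by
    rcases not_and_or.mp h with h' | h'
    · have : 0 < A := norm_pos_iff.mpr h'
      positivity
    · have : 0 < B := norm_pos_iff.mpr h'
      positivity
  set r := Real.sqrt (A ^ 2 + B ^ 2) with hr
  have hrpos : 0 < r := Real.sqrt_pos.mpr hAB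
  have hr2 : r ^ 2 = A ^ 2 + B ^ 2 := Real.sq_sqrt hAB.le
  refine ⟨![(A / r : ℝ) * sg x, (B / r : ℝ) * sg y], ?_, ?_⟩
  · have h1 : ‖(A / r : ℝ) * sg x‖ = A / r := by
      rw [norm_mul, abs_sg, mul_one, Complex.norm_real, Real.norm_eq_abs,
        abs_of_nonneg (by positivity : (0:ℝ) ≤ A / r)]
    have h2 : ‖(B / r : ℝ) * sg y‖ = B / r := by
      rw [norm_mul, abs_sg, mul_one, Complex.norm_real, Real.norm_eq_abs,
        abs_of_nonneg (by positivity : (0:ℝ) ≤ B / r)]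
    simp only [Matrix.cons_val_zero, Matrix.cons_val_one, Matrix.head_cons, h1, h2]
    rw [div_pow, div_pow, ← add_div, ← hr2]
    field_simp
  · simp only [Matrix.cons_val_zero, Matrix.cons_val_one, Matrix.head_cons]
    have e1 : x * ((A / r : ℝ) * sg x) = (A / r : ℝ) * (A : ℝ) := by
      rw [mul_comm x, mul_assoc, mul_comm (sg x) x, mul_sg]
    have e2 : y * ((B / r : ℝ) * sg y) = (B / r : ℝ) * (B : ℝ) := by
      rw [mul_comm y, mul_assoc, mul_comm (sg y) y, mul_sg]
    rw [e1, e2]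
    push_cast
    have : (A / r) * A + (B / r) * B = r := by
      field_simp
      linarith [hr2]
    exact_mod_cast congrArg (Complex.ofReal) this

theorem stmt_8 (a : Fin 2 → Fin 2 → ℂ)
    (hnorm : ∑ i, ∑ j, ‖a i j‖ ^ 2 = 1)
    (hmax : ∀ c d : Fin 2 → ℂ,
      (∑ i, ‖c i‖ ^ 2 = 1) → (∑ j, ‖d j‖ ^ 2 = 1) →
      ‖∑ i, ∑ j, (starRingEnd ℂ) (a i j) * c i * d j‖ ≤ ‖a 0 0‖) :
    a 0 1 = 0 ∧ a 1 0 = 0 ∧ ‖a 1 1‖ ^ 2 ≤ ‖a 0 0‖ ^ 2 := by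
  have key01 : a 0 1 = 0 := by
    by_cases h01 : a 0 1 = 0
    · exact h01
    · exfalso
      obtain ⟨d, hd1, hd2⟩ := exists_d ((starRingEnd ℂ) (a 0 0)) ((starRingEnd ℂ) (a 0 1))
        (by simp [h01])
      have hc : ∑ i, ‖(![1, 0] : Fin 2 → ℂ) i‖ ^ 2 = 1 := by
        simp [Fin.sum_univ_two]
      have hd : ∑ j, ‖d j‖ ^ 2 = 1 := by
        rw [Fin.sum_univ_two]; exact hd1
      have := hmax ![1, 0] d hc hd
      rw [show (∑ i, ∑ j, (starRingEnd ℂ) (a i j) * (![1, 0] : Fin 2 → ℂ) i * d j)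
          = (starRingEnd ℂ) (a 0 0) * d 0 + (starRingEnd ℂ) (a 0 1) * d 1 by
        simp [Fin.sum_univ_two]] at this
      rw [hd2, Complex.norm_real, Real.norm_eq_abs] at this
      simp only [Complex.norm_conj] at this
      set A := ‖a 0 0‖
      set B := ‖a 0 1‖
      have hBpos : 0 < B := norm_pos_iff.mpr h01
      have hsq : A ^ 2 + B ^ 2 ≤ A ^ 2 := by
        have h1 : Real.sqrt (A ^ 2 + B ^ 2) ≤ A := by
          rwa [abs_of_nonneg (Real.sqrt_nonneg _)] at this
        have h2 := Real.sq_sqrt (by positivity : (0:ℝ) ≤ A ^ 2 + B ^ 2)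
        nlinarith [Real.sqrt_nonneg (A ^ 2 + B ^ 2)]
      nlinarith
  have key10 : a 1 0 = 0 := by
    by_cases h10 : a 1 0 = 0
    · exact h10
    · exfalso
      obtain ⟨d, hd1, hd2⟩ := exists_d ((starRingEnd ℂ) (a 0 0)) ((starRingEnd ℂ) (a 1 0))
        (by simp [h10])
      have hd' : ∑ i, ‖d i‖ ^ 2 = 1 := by
        rw [Fin.sum_univ_two]; exact hd1
      have hc : ∑ j, ‖(![1, 0] : Fin 2 → ℂ) j‖ ^ 2 = 1 := by
        simp [Fin.sum_univ_two]
      have := hmax d ![1, 0] hd' hc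
      rw [show (∑ i, ∑ j, (starRingEnd ℂ) (a i j) * d i * (![1, 0] : Fin 2 → ℂ) j)
          = (starRingEnd ℂ) (a 0 0) * d 0 + (starRingEnd ℂ) (a 1 0) * d 1 by
        simp [Fin.sum_univ_two]] at this
      rw [hd2, Complex.norm_real, Real.norm_eq_abs] at this
      simp only [Complex.norm_conj] at this
      set A := ‖a 0 0‖
      set B := ‖a 1 0‖
      have hBpos : 0 < B := norm_pos_iff.mpr h10
      have hsq : A ^ 2 + B ^ 2 ≤ A ^ 2 := by
        have h1 : Real.sqrt (A ^ 2 + B ^ 2) ≤ A := by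
          rwa [abs_of_nonneg (Real.sqrt_nonneg _)] at this
        have h2 := Real.sq_sqrt (by positivity : (0:ℝ) ≤ A ^ 2 + B ^ 2)
        nlinarith [Real.sqrt_nonneg (A ^ 2 + B ^ 2)]
      nlinarith
  refine ⟨key01, key10, ?_⟩
  have hc : ∑ i, ‖(![0, 1] : Fin 2 → ℂ) i‖ ^ 2 = 1 := by
    simp [Fin.sum_univ_two]
  have hd : ∑ j, ‖(![0, sg ((starRingEnd ℂ) (a 1 1))] : Fin 2 → ℂ) j‖ ^ 2 = 1 := by
    simp [Fin.sum_univ_two, abs_sg]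
  have := hmax ![0, 1] ![0, sg ((starRingEnd ℂ) (a 1 1))] hc hd
  rw [show (∑ i, ∑ j, (starRingEnd ℂ) (a i j) * (![0, 1] : Fin 2 → ℂ) i *
      (![0, sg ((starRingEnd ℂ) (a 1 1))] : Fin 2 → ℂ) j)
      = (starRingEnd ℂ) (a 1 1) * sg ((starRingEnd ℂ) (a 1 1)) by
    simp [Fin.sum_univ_two]] at this
  rw [mul_sg, Complex.norm_conj, Complex.norm_real, Real.norm_eq_abs,
    abs_of_nonneg (norm_nonneg _)] at this
  exact pow_le_pow_left₀ (norm_nonneg _) this 2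
end
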